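/- For all p > 0 and x ∈ ℝ one has ∂²φ/∂x²(x,p) ≤ υ·exp(x + 2υ·e^x). -/

import Mathlib

open Real


lemma aux_pow_le (k n : ℕ) (hk : k ≤ 2) : ((n:ℝ)) ^ k ≤ 4 ^ n := by
  have h2 : ((n:ℝ)) ≤ 2 ^ n := by exact_mod_cast (Nat.lt_two_pow_self).le
  have h2' : (0:ℝ) ≤ (n:ℝ) := n.cast_nonneg
  calc ((n:ℝ)) ^ k ≤ ((2:ℝ) ^ n) ^ k := pow_le_pow_left₀ h2' h2 k
    _ ≤ ((2:ℝ) ^ n) ^ 2 := by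
        exact pow_le_pow_right₀ (one_le_pow₀ one_le_two) hk
    _ = 4 ^ n := by rw [← pow_mul, mul_comm, pow_mul]; norm_num

lemma aux_summable' (y : ℝ) (hy : 0 ≤ y) (k : ℕ) (hk : k ≤ 2) :
    Summable (fun n : ℕ => (n:ℝ) ^ k * y ^ n / (Nat.factorial n : ℝ)) := by
  have hsum := Real.summable_pow_div_factorial (4*y)
  apply Summable.of_nonneg_of_le _ _ hsum
  · intro n; positivity
  · intro n
    apply div_le_div_of_nonneg_right _ (by positivity)
    rw [mul_pow]
    exact mul_le_mul_of_nonneg_right (aux_pow_le k n hk) (by positivity)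

lemma aux_exp (y : ℝ) : ∑' n : ℕ, y ^ n / (Nat.factorial n : ℝ) = Real.exp y := by
  rw [Real.exp_eq_exp_ℝ, NormedSpace.exp_eq_tsum_div]

lemma aux_sum1 (y : ℝ) (hy : 0 ≤ y) :
    ∑' n : ℕ, (n:ℝ) * y ^ n / (Nat.factorial n : ℝ) = y * Real.exp y := by
  have hs := aux_summable' y hy 1 (by norm_num)
  simp only [pow_one] at hs
  rw [hs.tsum_eq_zero_add]
  have : (fun n : ℕ => ((n:ℕ)+1:ℝ) * y ^ (n+1) / (Nat.factorial (n+1) : ℝ))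
      = fun n : ℕ => y * (y ^ n / (Nat.factorial n : ℝ)) := by
    funext n
    rw [Nat.factorial_succ]
    push_cast
    have h1 : ((Nat.factorial n : ℝ)) ≠ 0 := by positivity
    field_simp
    ring
  simp only [Nat.cast_add, Nat.cast_one] at this ⊢
  rw [this, tsum_mul_left, aux_exp]
  simp

lemma aux_sum2 (y : ℝ) (hy : 0 ≤ y) :
    ∑' n : ℕ, (n:ℝ) ^ 2 * y ^ n / (Nat.factorial n : ℝ) = (y ^ 2 + y) * Real.exp y := by
  have hs := aux_summable' y hy 2 (by norm_num)
  rw [hs.tsum_eq_zero_add]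
  have : (fun n : ℕ => ((n:ℕ)+1:ℝ) ^ 2 * y ^ (n+1) / (Nat.factorial (n+1) : ℝ))
      = fun n : ℕ => y * ((n:ℝ) * y ^ n / (Nat.factorial n : ℝ)) + y * (y ^ n / (Nat.factorial n : ℝ)) := by
    funext n
    rw [Nat.factorial_succ]
    push_cast
    have h1 : ((Nat.factorial n : ℝ)) ≠ 0 := by positivity
    have h2 : ((n:ℝ) + 1) ≠ 0 := by positivity
    field_simp
    ring
  simp only [Nat.cast_add, Nat.cast_one] at this ⊢
  rw [this, Summable.tsum_add, tsum_mul_left, tsum_mul_left, aux_sum1 y hy, aux_exp]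
  · ring
  · have := (aux_summable' y hy 1 (by norm_num)).mul_left y
    simpa [pow_one] using this
  · have := (aux_summable' y hy 0 (by norm_num)).mul_left y
    simpa using this


noncomputable def auxS (υ c : ℝ) (k : ℕ) (z : ℝ) : ℝ :=
  ∑' n : ℕ, (n:ℝ) ^ k * ((υ ^ n / (Nat.factorial n : ℝ)) * Real.exp (z * n - c * (n:ℝ) ^ 2))

lemma auxF_le (υ c : ℝ) (hυ : 0 ≤ υ) (hc : 0 ≤ c) (k n : ℕ) (z : ℝ) :
    (n:ℝ) ^ k * ((υ ^ n / (Nat.factorial n : ℝ)) * Real.exp (z * n - c * (n:ℝ) ^ 2)) ≤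
      (n:ℝ) ^ k * (υ * Real.exp z) ^ n / (Nat.factorial n : ℝ) := by
  have hexp : Real.exp (z * n - c * (n:ℝ) ^ 2) ≤ Real.exp (z * n) :=
    Real.exp_le_exp.2 (sub_le_self _ (by positivity))
  have hzn : (Real.exp z) ^ n = Real.exp (z * n) := by
    rw [← Real.exp_nat_mul, mul_comm]
  calc (n:ℝ) ^ k * ((υ ^ n / (Nat.factorial n : ℝ)) * Real.exp (z * n - c * (n:ℝ) ^ 2))
      ≤ (n:ℝ) ^ k * ((υ ^ n / (Nat.factorial n : ℝ)) * Real.exp (z * n)) := by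
        gcongr
    _ = (n:ℝ) ^ k * (υ * Real.exp z) ^ n / (Nat.factorial n : ℝ) := by
        rw [mul_pow, hzn]; ring


lemma auxS_summable (υ c : ℝ) (hυ : 0 ≤ υ) (hc : 0 ≤ c) (k : ℕ) (hk : k ≤ 2) (z : ℝ) :
    Summable (fun n : ℕ =>
      (n:ℝ) ^ k * ((υ ^ n / (Nat.factorial n : ℝ)) * Real.exp (z * n - c * (n:ℝ) ^ 2))) := by
  have hsum := aux_summable' (υ * Real.exp z) (by positivity) k hk
  apply Summable.of_nonneg_of_le _ _ hsum
  · intro n; positivity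
  · intro n; exact auxF_le υ c hυ hc k n z

lemma auxS_deriv (υ c : ℝ) (hυ : 0 ≤ υ) (hc : 0 ≤ c) (k : ℕ) (hk : k ≤ 1) (y : ℝ) :
    HasDerivAt (auxS υ c k) (auxS υ c (k+1) y) y := by
  unfold auxS
  refine hasDerivAt_tsum_of_isPreconnected
    (u := fun n : ℕ => (n:ℝ) ^ (k+1) * (υ * Real.exp (y+1)) ^ n / (Nat.factorial n : ℝ))
    (g' := fun n z => (n:ℝ) ^ (k+1) * ((υ ^ n / (Nat.factorial n : ℝ)) *
      Real.exp (z * n - c * (n:ℝ) ^ 2)))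
    (aux_summable' _ (by positivity) (k+1) (by omega)) isOpen_Iio isPreconnected_Iio
    (y₀ := y) ?_ ?_ (Set.mem_Iio.2 (lt_add_one y)) ?_ (Set.mem_Iio.2 (lt_add_one y))
  · intro n z hz
    have h2 := (((hasDerivAt_id z).mul_const (n:ℝ)).sub_const (c * (n:ℝ)^2)).exp.const_mul
      ((n:ℝ) ^ k * (υ ^ n / (Nat.factorial n : ℝ)))
    convert h2 using 1
    · rfl
    · funext w; simp only [id_eq]; ring
    · simp only [id_eq]; rw [pow_succ]; ring
  · intro n z hz
    rw [Real.norm_of_nonneg (by positivity)]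
    calc (n:ℝ) ^ (k+1) * ((υ ^ n / (Nat.factorial n : ℝ)) * Real.exp (z * n - c * (n:ℝ) ^ 2))
        ≤ (n:ℝ) ^ (k+1) * (υ * Real.exp z) ^ n / (Nat.factorial n : ℝ) :=
          auxF_le υ c hυ hc (k+1) n z
      _ ≤ (n:ℝ) ^ (k+1) * (υ * Real.exp (y+1)) ^ n / (Nat.factorial n : ℝ) := by
          gcongr
          exact (Set.mem_Iio.1 hz).le
  · exact auxS_summable υ c hυ hc k (by omega) y

lemma auxS_one_le (υ c : ℝ) (hυ : 0 ≤ υ) (hc : 0 ≤ c) (z : ℝ) : 1 ≤ auxS υ c 0 z := by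
  have hs := auxS_summable υ c hυ hc 0 (by norm_num) z
  have h := hs.le_tsum 0 (fun j _ => by positivity)
  simpa [auxS] using h

lemma aux_main (υ c x : ℝ) (hυ : 0 < υ) (hc : 0 < c) :
    deriv (deriv (fun z => Real.log (auxS υ c 0 z))) x ≤ υ * Real.exp (x + 2 * υ * Real.exp x) := by
  have hυ' := hυ.le
  have hc' := hc.le
  have hApos : ∀ z, (0:ℝ) < auxS υ c 0 z := fun z =>
    lt_of_lt_of_le one_pos (auxS_one_le υ c hυ' hc' z)
  have hd1 : deriv (fun z => Real.log (auxS υ c 0 z)) =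
      fun y => auxS υ c 1 y / auxS υ c 0 y := by
    funext y
    exact ((auxS_deriv υ c hυ' hc' 0 (by norm_num) y).log (hApos y).ne').deriv
  rw [hd1]
  have hD1 : HasDerivAt (fun y => auxS υ c 1 y / auxS υ c 0 y)
      ((auxS υ c 2 x * auxS υ c 0 x - auxS υ c 1 x * auxS υ c 1 x) / (auxS υ c 0 x) ^ 2) x :=
    (auxS_deriv υ c hυ' hc' 1 le_rfl x).div (auxS_deriv υ c hυ' hc' 0 (by norm_num) x)
      (hApos x).ne'
  rw [hD1.deriv]
  set A := auxS υ c 0 x with hA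
  set B := auxS υ c 1 x with hB
  set C := auxS υ c 2 x with hC
  have hA1 : 1 ≤ A := auxS_one_le υ c hυ' hc' x
  have hB0 : 0 ≤ B := tsum_nonneg (fun n => by positivity)
  have hC0 : 0 ≤ C := tsum_nonneg (fun n => by positivity)
  have h1 : (C * A - B * B) / A ^ 2 ≤ C := by
    rw [div_le_iff₀ (by positivity)]
    nlinarith [mul_nonneg (mul_nonneg hC0 (by linarith : (0:ℝ) ≤ A)) (by linarith : (0:ℝ) ≤ A - 1),
      mul_self_nonneg B]
  refine h1.trans ?_
  have h2 : C ≤ ((υ * Real.exp x) ^ 2 + υ * Real.exp x) * Real.exp (υ * Real.exp x) := by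
    rw [← aux_sum2 (υ * Real.exp x) (by positivity)]
    exact Summable.tsum_le_tsum (fun n => auxF_le υ c hυ' hc' 2 n x)
      (auxS_summable υ c hυ' hc' 2 le_rfl x) (aux_summable' (υ * Real.exp x) (by positivity) 2 le_rfl)
  refine h2.trans ?_
  set y := υ * Real.exp x with hy
  have hy0 : 0 < y := by positivity
  have h3 : y + 1 ≤ Real.exp y := Real.add_one_le_exp y
  have h4 : υ * Real.exp (x + 2 * υ * Real.exp x) = y * (Real.exp y * Real.exp y) := by
    rw [hy, ← Real.exp_add, Real.exp_add, Real.exp_add]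
    ring_nf
    rw [show υ * rexp x * 2 = υ * rexp x + υ * rexp x by ring, Real.exp_add, sq]
  rw [h4]
  nlinarith [exp_pos y, mul_le_mul_of_nonneg_left h3 hy0.le]


/-- The function `φ(x,p) = ln Σ_{n≥0} (υⁿ/n!)·exp(xn − (ap/2)n²)`. -/
noncomputable def phi (υ a x p : ℝ) : ℝ :=
  Real.log (∑' n : ℕ, (υ ^ n / (Nat.factorial n : ℝ)) *
    Real.exp (x * n - (a * p / 2) * (n : ℝ) ^ 2))


theorem stmt_16 (υ a : ℝ) (hυ : 0 < υ) (ha : 1 < a) (p x : ℝ) (hp : 0 < p) :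
    deriv (deriv (fun x' => phi υ a x' p)) x ≤ υ * Real.exp (x + 2 * υ * Real.exp x) := by
  have ha0 : (0:ℝ) < a := lt_trans one_pos ha
  have hc : 0 < a * p / 2 := by positivity
  have hphi : (fun x' => phi υ a x' p) = fun z => Real.log (auxS υ (a * p / 2) 0 z) := by
    funext z
    unfold phi auxS
    congr 1
    exact tsum_congr fun n => by rw [pow_zero, one_mul]
  rw [hphi]
  exact aux_main υ (a * p / 2) x hυ hc
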